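/- If λ has the generalized logistic density p(λ) = (1/B(γ,η))·φ·e^(-φηλ)/(1+e^(-φλ))^(η+γ), then Var[λ] = (ψ'(γ) + ψ'(η))/φ², where ψ' is the trigamma function. -/

import Mathlib

open MeasureTheory Real

/-- The digamma function ψ = (log Γ)′. -/
noncomputable def digamma (x : ℝ) : ℝ :=
  deriv (fun y : ℝ => Real.log (Real.Gamma y)) x

/-- The trigamma function ψ′ = derivative of the digamma function. -/
noncomputable def trigamma (x : ℝ) : ℝ := deriv digamma x

open Set

lemma analyticAt_rgamma {x : ℝ} (hx : 0 < x) : AnalyticAt ℝ Real.Gamma x := by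
  have hU : IsOpen {z : ℂ | 0 < z.re} := isOpen_lt continuous_const Complex.continuous_re
  have hG : AnalyticAt ℂ Complex.Gamma (x : ℂ) := by
    refine DifferentiableOn.analyticAt (s := {z : ℂ | 0 < z.re}) ?_ (hU.mem_nhds (by simpa))
    intro z hz
    refine (Complex.differentiableAt_Gamma z fun m => ?_).differentiableWithinAt
    intro h
    rw [h] at hz
    simp only [Set.mem_setOf_eq, Complex.neg_re, Complex.natCast_re] at hz
    have : (0:ℝ) ≤ m := Nat.cast_nonneg m
    linarith
  have h2 : AnalyticAt ℝ (fun y : ℝ => (Complex.Gamma (y : ℂ)).re) x :=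
    (Complex.reCLM.analyticAt _).comp ((hG.restrictScalars).comp (Complex.ofRealCLM.analyticAt x))
  refine h2.congr (Filter.Eventually.of_forall fun y => ?_)
  simp [Complex.Gamma_ofReal]

lemma analyticAt_rlog {x : ℝ} (hx : 0 < x) : AnalyticAt ℝ Real.log x := by
  have hG : AnalyticAt ℂ Complex.log (x : ℂ) :=
    analyticAt_clog (Complex.ofReal_mem_slitPlane.2 hx)
  have h2 : AnalyticAt ℝ (fun y : ℝ => (Complex.log (y : ℂ)).re) x :=
    (Complex.reCLM.analyticAt _).comp ((hG.restrictScalars).comp (Complex.ofRealCLM.analyticAt x))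
  refine h2.congr ?_
  filter_upwards [eventually_gt_nhds hx] with y hy
  rw [← Complex.ofReal_log hy.le, Complex.ofReal_re]


lemma AnalyticAt.deriv1 {f : ℝ → ℝ} {x : ℝ} (h : AnalyticAt ℝ f x) :
    AnalyticAt ℝ (deriv f) x := by
  have h2 : AnalyticAt ℝ (fun y => fderiv ℝ f y 1) x :=
    ((ContinuousLinearMap.apply ℝ ℝ (1 : ℝ)).analyticAt _).comp h.fderiv
  exact h2.congr (Filter.Eventually.of_forall fun y => rfl)

lemma analyticAt_logGamma {x : ℝ} (hx : 0 < x) :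
    AnalyticAt ℝ (fun y : ℝ => Real.log (Real.Gamma y)) x :=
  (analyticAt_rlog (Real.Gamma_pos_of_pos hx)).comp (analyticAt_rgamma hx)

lemma hasDerivAt_logGamma {x : ℝ} (hx : 0 < x) :
    HasDerivAt (fun y : ℝ => Real.log (Real.Gamma y)) (digamma x) x :=
  (analyticAt_logGamma hx).differentiableAt.hasDerivAt

lemma analyticAt_digamma {x : ℝ} (hx : 0 < x) : AnalyticAt ℝ digamma x :=
  (analyticAt_logGamma hx).deriv1

lemma hasDerivAt_digamma {x : ℝ} (hx : 0 < x) : HasDerivAt digamma (trigamma x) x :=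
  (analyticAt_digamma hx).differentiableAt.hasDerivAt

lemma exp_alg (c L1 L2 X Y : ℝ) (hc : c ≠ 0) :
    (c * (Real.exp L1 * Real.exp L2))⁻¹ * (c * Real.exp X / Real.exp Y) =
      Real.exp (X - Y - L1 - L2) := by
  rw [Real.exp_sub, Real.exp_sub, Real.exp_sub]
  field_simp

lemma realBeta_integrableOn {a b : ℝ} (ha : 0 < a) (hb : 0 < b) :
    IntegrableOn (fun u : ℝ => u ^ (a - 1) * (1 - u) ^ (b - 1)) (Ioo (0:ℝ) 1) := by
  have hc := Complex.betaIntegral_convergent (u := (a : ℂ)) (v := (b : ℂ))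
    (by simpa using ha) (by simpa using hb)
  have h1 : IntegrableOn (fun x : ℝ => (x : ℂ) ^ ((a : ℂ) - 1) * ((1 : ℂ) - x) ^ ((b : ℂ) - 1))
      (Ioc (0:ℝ) 1) := by
    rwa [intervalIntegrable_iff_integrableOn_Ioc_of_le (by norm_num)] at hc
  have h2 : IntegrableOn (fun x : ℝ => ((x : ℂ) ^ ((a : ℂ) - 1) * ((1 : ℂ) - x) ^ ((b : ℂ) - 1)).re)
      (Ioo (0:ℝ) 1) := IntegrableOn.mono_set h1.re Ioo_subset_Ioc_self
  refine (IntegrableOn.congr_fun h2 (fun u hu => ?_) measurableSet_Ioo)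
  obtain ⟨hu0, hu1⟩ := hu
  have e3 : ((u : ℂ) ^ ((a : ℂ) - 1) * ((1 : ℂ) - u) ^ ((b : ℂ) - 1)).re
      = u ^ (a - 1) * (1 - u) ^ (b - 1) := by
    rw [show ((a:ℂ) - 1) = ((a - 1 : ℝ) : ℂ) by push_cast; ring,
      show ((b:ℂ) - 1) = ((b - 1 : ℝ) : ℂ) by push_cast; ring,
      show ((1:ℂ) - u) = ((1 - u : ℝ) : ℂ) by push_cast; ring,
      ← Complex.ofReal_cpow hu0.le, ← Complex.ofReal_cpow (by linarith : (0:ℝ) ≤ 1 - u),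
      ← Complex.ofReal_mul, Complex.ofReal_re]
  simpa using e3
lemma realBeta_value {a b : ℝ} (ha : 0 < a) (hb : 0 < b) :
    ∫ u in Ioo (0:ℝ) 1, u ^ (a - 1) * (1 - u) ^ (b - 1)
      = Real.Gamma a * Real.Gamma b / Real.Gamma (a + b) := by
  have key := Complex.Gamma_mul_Gamma_eq_betaIntegral (s := (a:ℂ)) (t := (b:ℂ))
    (by simpa using ha) (by simpa using hb)
  have hI : Complex.betaIntegral (a:ℂ) (b:ℂ)
      = ((∫ u in (0:ℝ)..1, u ^ (a - 1) * (1 - u) ^ (b - 1) : ℝ) : ℂ) := by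
    rw [Complex.betaIntegral, ← intervalIntegral.integral_ofReal]
    refine intervalIntegral.integral_congr fun x hx => ?_
    rw [Set.uIcc_of_le (by norm_num : (0:ℝ) ≤ 1)] at hx
    obtain ⟨hx0, hx1⟩ := hx
    rw [Complex.ofReal_mul, Complex.ofReal_cpow hx0, Complex.ofReal_cpow (by linarith : (0:ℝ) ≤ 1 - x)]
    push_cast
    ring
  rw [hI, Complex.Gamma_ofReal, Complex.Gamma_ofReal, show ((a:ℂ) + b) = ((a+b : ℝ) : ℂ) by
    push_cast; ring, Complex.Gamma_ofReal, ← Complex.ofReal_mul, ← Complex.ofReal_mul] at key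
  have key2 : Real.Gamma a * Real.Gamma b
      = Real.Gamma (a + b) * ∫ u in (0:ℝ)..1, u ^ (a - 1) * (1 - u) ^ (b - 1) :=
    Complex.ofReal_injective key
  have hpos : 0 < Real.Gamma (a + b) := Real.Gamma_pos_of_pos (by linarith)
  rw [intervalIntegral.integral_of_le (by norm_num : (0:ℝ) ≤ 1),
    MeasureTheory.integral_Ioc_eq_integral_Ioo] at key2
  rw [eq_div_iff hpos.ne']
  linarith [key2]

lemma master {φ : ℝ} (hφ : 0 < φ) {a b : ℝ} (ha : 0 < a) (hb : 0 < b) :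
    Integrable (fun l : ℝ => φ * Real.exp (-(φ * b * l)) / (1 + Real.exp (-(φ * l))) ^ (a + b)) ∧
    ∫ l : ℝ, φ * Real.exp (-(φ * b * l)) / (1 + Real.exp (-(φ * l))) ^ (a + b)
      = Real.Gamma a * Real.Gamma b / Real.Gamma (a + b) := by
  set K : ℝ → ℝ :=
    fun l => φ * Real.exp (-(φ * b * l)) / (1 + Real.exp (-(φ * l))) ^ (a + b) with hK
  set g : ℝ → ℝ := fun u => (Real.log u - Real.log (1 - u)) / φ with hg
  set g' : ℝ → ℝ := fun u => (φ * (u * (1 - u)))⁻¹ with hg'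
  -- derivative
  have hderiv : ∀ u ∈ Ioo (0:ℝ) 1, HasDerivWithinAt g (g' u) (Ioo (0:ℝ) 1) u := by
    intro u hu
    obtain ⟨hu0, hu1⟩ := hu
    have h1u : (0:ℝ) < 1 - u := by linarith
    have d1 : HasDerivAt (fun v : ℝ => Real.log v) u⁻¹ u := Real.hasDerivAt_log hu0.ne'
    have d2 : HasDerivAt (fun v : ℝ => Real.log (1 - v)) ((1 - u)⁻¹ * (-1)) u :=
      (Real.hasDerivAt_log h1u.ne').comp u ((hasDerivAt_id u).const_sub 1)
    have d3 := (d1.sub d2).div_const φ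
    have : (u⁻¹ - (1 - u)⁻¹ * (-1)) / φ = g' u := by
      rw [hg']
      field_simp
      ring
    rw [this] at d3
    exact d3.hasDerivWithinAt
  -- injectivity
  have hinj : InjOn g (Ioo (0:ℝ) 1) := by
    intro u hu v hv h
    obtain ⟨hu0, hu1⟩ := hu
    obtain ⟨hv0, hv1⟩ := hv
    have h1u : (0:ℝ) < 1 - u := by linarith
    have h1v : (0:ℝ) < 1 - v := by linarith
    have h2 : Real.log u - Real.log (1 - u) = Real.log v - Real.log (1 - v) := by
      have := congrArg (fun t => t * φ) h
      simp only [hg, div_mul_cancel₀ _ hφ.ne'] at this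
      linarith [this]
    have h3 : Real.log (u * (1 - v)) = Real.log (v * (1 - u)) := by
      rw [Real.log_mul hu0.ne' h1v.ne', Real.log_mul hv0.ne' h1u.ne']
      linarith
    have h4 : u * (1 - v) = v * (1 - u) := by
      have := congrArg Real.exp h3
      rwa [Real.exp_log (by positivity), Real.exp_log (by positivity)] at this
    nlinarith
  -- surjectivity
  have himg : g '' Ioo (0:ℝ) 1 = univ := by
    apply eq_univ_of_forall
    intro l
    have he : (0:ℝ) < Real.exp (-(φ * l)) := Real.exp_pos _
    refine ⟨(1 + Real.exp (-(φ * l)))⁻¹, ⟨by positivity, ?_⟩, ?_⟩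
    · rw [inv_lt_one_iff₀]
      right
      linarith
    · have h1 : (0:ℝ) < 1 + Real.exp (-(φ * l)) := by linarith
      have hcompl : 1 - (1 + Real.exp (-(φ * l)))⁻¹
          = Real.exp (-(φ * l)) / (1 + Real.exp (-(φ * l))) := by
        field_simp
        ring
      rw [hg]
      simp only
      rw [hcompl, Real.log_inv, Real.log_div he.ne' h1.ne', Real.log_exp]
      field_simp
      ring
  -- pointwise identity
  have hpt : ∀ u ∈ Ioo (0:ℝ) 1, |g' u| • K (g u) = u ^ (a - 1) * (1 - u) ^ (b - 1) := by
    intro u hu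
    obtain ⟨hu0, hu1⟩ := hu
    have h1u : (0:ℝ) < 1 - u := by linarith
    have hφgu : φ * g u = Real.log u - Real.log (1 - u) := by
      rw [hg]; field_simp
    have he : Real.exp (-(φ * g u)) = Real.exp (Real.log (1 - u) - Real.log u) := by
      rw [hφgu]; ring_nf
    have h1e : 1 + Real.exp (-(φ * g u)) = u⁻¹ := by
      rw [he, Real.exp_sub, Real.exp_log h1u, Real.exp_log hu0]
      field_simp
      ring
    have hX : Real.exp (-(φ * b * g u))
        = Real.exp (b * Real.log (1 - u) - b * Real.log u) := by
      rw [show φ * b * g u = b * (φ * g u) by ring, hφgu]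
      ring_nf
    have hY : (1 + Real.exp (-(φ * g u))) ^ (a + b)
        = Real.exp (-(Real.log u) * (a + b)) := by
      rw [h1e, Real.rpow_def_of_pos (inv_pos.2 hu0), Real.log_inv]
    have habs : |g' u| = (φ * (Real.exp (Real.log u) * Real.exp (Real.log (1 - u))))⁻¹ := by
      rw [hg', abs_of_pos (by positivity), Real.exp_log hu0, Real.exp_log h1u]
    rw [smul_eq_mul, hK]
    simp only
    rw [hX, hY, habs, exp_alg _ _ _ _ _ hφ.ne',
      Real.rpow_def_of_pos hu0, Real.rpow_def_of_pos h1u, ← Real.exp_add]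
    congr 1
    ring
  have hint : Integrable K := by
    rw [← integrableOn_univ, ← himg,
      integrableOn_image_iff_integrableOn_abs_deriv_smul measurableSet_Ioo hderiv hinj]
    exact (realBeta_integrableOn ha hb).congr_fun (fun u hu => (hpt u hu).symm) measurableSet_Ioo
  refine ⟨hint, ?_⟩
  rw [← setIntegral_univ, ← himg,
    integral_image_eq_integral_abs_deriv_smul measurableSet_Ioo hderiv hinj,
    setIntegral_congr_fun measurableSet_Ioo hpt, realBeta_value ha hb]

noncomputable def q0 (φ η γ : ℝ) (l : ℝ) : ℝ :=
  φ * Real.exp (-(φ * η * l)) / (1 + Real.exp (-(φ * l))) ^ (η + γ)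


lemma q0_nonneg (φ η γ : ℝ) (hφ : 0 < φ) (l : ℝ) : 0 ≤ q0 φ η γ l := by
  unfold q0
  have h1 : (0:ℝ) < 1 + Real.exp (-(φ * l)) := by positivity
  positivity

lemma q0_cont (φ η γ : ℝ) : Continuous (q0 φ η γ) := by
  unfold q0
  apply Continuous.div
  · fun_prop
  · apply Continuous.rpow_const (by fun_prop)
    intro l
    left
    positivity
  · intro l
    positivity

lemma mgf {φ η γ : ℝ} (hφ : 0 < φ) (hη : 0 < η) (hγ : 0 < γ)
    {s : ℝ} (hs : |s| < φ * min γ η) :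
    Integrable (fun l => Real.exp (s * l) * q0 φ η γ l) ∧
    ∫ l : ℝ, Real.exp (s * l) * q0 φ η γ l
      = Real.Gamma (γ + s / φ) * Real.Gamma (η - s / φ) / Real.Gamma (γ + η) := by
  obtain ⟨hs1, hs2⟩ := abs_lt.1 hs
  have hmin1 : φ * min γ η ≤ φ * γ := by
    apply mul_le_mul_of_nonneg_left (min_le_left _ _) hφ.le
  have hmin2 : φ * min γ η ≤ φ * η := by
    apply mul_le_mul_of_nonneg_left (min_le_right _ _) hφ.le
  have ha : 0 < γ + s / φ := by
    have h : -γ < s / φ := by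
      rw [lt_div_iff₀ hφ]
      nlinarith
    linarith
  have hb : 0 < η - s / φ := by
    have h : s / φ < η := by
      rw [div_lt_iff₀ hφ]
      nlinarith
    linarith
  have heq : (fun l => Real.exp (s * l) * q0 φ η γ l)
      = (fun l : ℝ => φ * Real.exp (-(φ * (η - s / φ) * l)) /
          (1 + Real.exp (-(φ * l))) ^ ((γ + s / φ) + (η - s / φ))) := by
    funext l
    unfold q0
    have hexp : -(φ * (η - s / φ) * l) = s * l + -(φ * η * l) := by
      field_simp
      ring
    have hpow : (γ + s / φ) + (η - s / φ) = η + γ := by ring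
    rw [hpow, hexp, Real.exp_add]
    ring
  obtain ⟨hi, hv⟩ := master hφ ha hb
  rw [heq]
  refine ⟨hi, ?_⟩
  rw [hv, show γ + s / φ + (η - s / φ) = γ + η by ring]

lemma E0 {c κ l : ℝ} (h : |c| ≤ κ) :
    Real.exp (c * l) ≤ Real.exp (κ * l) + Real.exp (-(κ * l)) := by
  rcases le_total 0 l with hl | hl
  · have h2 : c * l ≤ κ * l := mul_le_mul_of_nonneg_right (abs_le.1 h).2 hl
    exact (Real.exp_le_exp.2 h2).trans (le_add_of_nonneg_right (Real.exp_pos _).le)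
  · have h2 : c * l ≤ -(κ * l) := by
      have := mul_le_mul_of_nonpos_right (abs_le.1 h).1 hl
      linarith
    exact (Real.exp_le_exp.2 h2).trans (le_add_of_nonneg_left (Real.exp_pos _).le)

lemma E1 {δ : ℝ} (hδ : 0 < δ) (l : ℝ) :
    |l| ≤ δ⁻¹ * (Real.exp (δ * l) + Real.exp (-(δ * l))) := by
  have h1 : δ * |l| ≤ Real.exp (δ * |l|) := by linarith [Real.add_one_le_exp (δ * |l|)]
  have h2 : Real.exp (δ * |l|) ≤ Real.exp (δ * l) + Real.exp (-(δ * l)) := by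
    rcases abs_cases l with ⟨h, _⟩ | ⟨h, _⟩
    · rw [h]
      exact le_add_of_nonneg_right (Real.exp_pos _).le
    · rw [h, show δ * -l = -(δ * l) by ring]
      exact le_add_of_nonneg_left (Real.exp_pos _).le
  have h3 : |l| = δ⁻¹ * (δ * |l|) := by
    rw [inv_mul_cancel_left₀ hδ.ne']
  rw [h3]
  exact mul_le_mul_of_nonneg_left (h1.trans h2) (inv_pos.2 hδ).le


section D
variable {φ η γ : ℝ} (hφ : 0 < φ) (hη : 0 < η) (hγ : 0 < γ)

lemma bound_integrable (hφ : 0 < φ) (hη : 0 < η) (hγ : 0 < γ) (C : ℝ) :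
    Integrable (fun l => C * (Real.exp ((3 * (φ * min γ η / 4)) * l) * q0 φ η γ l +
      Real.exp ((-(3 * (φ * min γ η / 4))) * l) * q0 φ η γ l)) := by
  have hm0 : 0 < φ * min γ η := by
    have : 0 < min γ η := lt_min hγ hη
    positivity
  have hκ : |3 * (φ * min γ η / 4)| < φ * min γ η := by
    rw [abs_of_pos (by linarith)]
    linarith
  have hκ' : |(-(3 * (φ * min γ η / 4)))| < φ * min γ η := by
    rw [abs_neg]
    exact hκ
  exact ((mgf hφ hη hγ hκ).1.add (mgf hφ hη hγ hκ').1).const_mul C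

lemma D1 (hφ : 0 < φ) (hη : 0 < η) (hγ : 0 < γ) {s₀ : ℝ} (hs₀ : |s₀| < φ * min γ η / 4) :
    Integrable (fun l => l * (Real.exp (s₀ * l) * q0 φ η γ l)) ∧
      HasDerivAt (fun s => ∫ l : ℝ, Real.exp (s * l) * q0 φ η γ l)
        (∫ l : ℝ, l * (Real.exp (s₀ * l) * q0 φ η γ l)) s₀ := by
  have hm0 : 0 < φ * min γ η := by
    have : 0 < min γ η := lt_min hγ hη
    positivity
  set ε : ℝ := φ * min γ η / 4 with hε
  have hεpos : 0 < ε := by linarith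
  set κ : ℝ := 3 * ε with hκdef
  have h1 : ∀ᶠ s in nhds s₀, AEStronglyMeasurable
      (fun l => Real.exp (s * l) * q0 φ η γ l) (volume : Measure ℝ) :=
    Filter.Eventually.of_forall fun s =>
      ((Real.continuous_exp.comp (continuous_const.mul continuous_id)).mul
        (q0_cont φ η γ)).aestronglyMeasurable
  have h2 : Integrable (fun l => Real.exp (s₀ * l) * q0 φ η γ l) :=
    (mgf hφ hη hγ (by rw [hε] at hs₀; linarith)).1
  have h3 : AEStronglyMeasurable (fun l => l * (Real.exp (s₀ * l) * q0 φ η γ l))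
      (volume : Measure ℝ) :=
    (continuous_id.mul ((Real.continuous_exp.comp
      (continuous_const.mul continuous_id)).mul (q0_cont φ η γ))).aestronglyMeasurable
  have h4 : ∀ᵐ l : ℝ, ∀ s ∈ Metric.ball s₀ ε, ‖l * (Real.exp (s * l) * q0 φ η γ l)‖
      ≤ ε⁻¹ * 2 * (Real.exp (κ * l) * q0 φ η γ l + Real.exp ((-κ) * l) * q0 φ η γ l) := by
    refine Filter.Eventually.of_forall fun l => fun s hs => ?_
    have hsabs : |s| < 2 * ε := by
      have hd : |s - s₀| < ε := by simpa [Real.dist_eq] using hs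
      have : |s| ≤ |s₀| + |s - s₀| := by
        calc |s| = |s₀ + (s - s₀)| := by ring_nf
          _ ≤ |s₀| + |s - s₀| := abs_add_le _ _
      rw [hε] at hs₀
      linarith
    have hq := q0_nonneg φ η γ hφ l
    have key : |l| * Real.exp (s * l) ≤
        ε⁻¹ * 2 * (Real.exp (κ * l) + Real.exp (-(κ * l))) := by
      have he1 := E1 hεpos l
      have h2' : |l| * Real.exp (s * l) ≤
          ε⁻¹ * (Real.exp ((s + ε) * l) + Real.exp ((s - ε) * l)) := by
        calc |l| * Real.exp (s * l)
            ≤ ε⁻¹ * (Real.exp (ε * l) + Real.exp (-(ε * l))) * Real.exp (s * l) :=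
              mul_le_mul_of_nonneg_right he1 (Real.exp_pos _).le
          _ = ε⁻¹ * (Real.exp ((s + ε) * l) + Real.exp ((s - ε) * l)) := by
              rw [show (s + ε) * l = ε * l + s * l by ring,
                show (s - ε) * l = -(ε * l) + s * l by ring,
                Real.exp_add, Real.exp_add]
              ring
      refine h2'.trans ?_
      have hb1 : |s + ε| ≤ κ := by
        rw [hκdef]
        have := abs_add_le s ε
        rw [abs_of_pos hεpos] at this
        linarith
      have hb2 : |s - ε| ≤ κ := by
        rw [hκdef]
        have := abs_sub s ε
        rw [abs_of_pos hεpos] at this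
        linarith
      have hl3 : Real.exp ((s + ε) * l) ≤ Real.exp (κ * l) + Real.exp (-(κ * l)) := E0 hb1
      have hl4 : Real.exp ((s - ε) * l) ≤ Real.exp (κ * l) + Real.exp (-(κ * l)) := E0 hb2
      have h5 : (0:ℝ) < ε⁻¹ := inv_pos.2 hεpos
      nlinarith
    have hnorm : ‖l * (Real.exp (s * l) * q0 φ η γ l)‖
        = |l| * Real.exp (s * l) * q0 φ η γ l := by
      rw [norm_mul, norm_mul, Real.norm_eq_abs, Real.norm_eq_abs, Real.norm_eq_abs,
        abs_of_pos (Real.exp_pos _), abs_of_nonneg hq, mul_assoc]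
    rw [hnorm, show ε⁻¹ * 2 * (Real.exp (κ * l) * q0 φ η γ l +
        Real.exp ((-κ) * l) * q0 φ η γ l)
      = (ε⁻¹ * 2 * (Real.exp (κ * l) + Real.exp (-(κ * l)))) * q0 φ η γ l by
        rw [show (-κ) * l = -(κ * l) by ring]; ring]
    exact mul_le_mul_of_nonneg_right key hq
  have h5 := bound_integrable hφ hη hγ (ε⁻¹ * 2)
  have h6 : ∀ᵐ l : ℝ, ∀ s ∈ Metric.ball s₀ ε,
      HasDerivAt (fun s => Real.exp (s * l) * q0 φ η γ l)
        (l * (Real.exp (s * l) * q0 φ η γ l)) s := by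
    refine Filter.Eventually.of_forall fun l => fun s _ => ?_
    have h := (((hasDerivAt_id s).mul_const l).exp).mul_const (q0 φ η γ l)
    simp only [id_eq] at h
    refine h.congr_deriv ?_
    ring
  exact hasDerivAt_integral_of_dominated_loc_of_deriv_le (Metric.ball_mem_nhds s₀ hεpos) h1 h2 h3 h4 h5 h6

lemma D2 (hφ : 0 < φ) (hη : 0 < η) (hγ : 0 < γ) :
    Integrable (fun l : ℝ => l ^ 2 * (Real.exp ((0:ℝ) * l) * q0 φ η γ l)) ∧
      HasDerivAt (fun s => ∫ l : ℝ, l * (Real.exp (s * l) * q0 φ η γ l))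
        (∫ l : ℝ, l ^ 2 * (Real.exp ((0:ℝ) * l) * q0 φ η γ l)) 0 := by
  have hm0 : 0 < φ * min γ η := by
    have : 0 < min γ η := lt_min hγ hη
    positivity
  set ε : ℝ := φ * min γ η / 4 with hε
  have hεpos : 0 < ε := by linarith
  set κ : ℝ := 3 * ε with hκdef
  have h1 : ∀ᶠ s in nhds (0:ℝ), AEStronglyMeasurable
      (fun l => l * (Real.exp (s * l) * q0 φ η γ l)) (volume : Measure ℝ) :=
    Filter.Eventually.of_forall fun s =>
      (continuous_id.mul ((Real.continuous_exp.comp (continuous_const.mul continuous_id)).mul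
        (q0_cont φ η γ))).aestronglyMeasurable
  have h2 : Integrable (fun l => l * (Real.exp ((0:ℝ) * l) * q0 φ η γ l)) :=
    (D1 hφ hη hγ (by rw [abs_zero, ← hε]; exact hεpos)).1
  have h3 : AEStronglyMeasurable (fun l : ℝ => l ^ 2 * (Real.exp ((0:ℝ) * l) * q0 φ η γ l))
      (volume : Measure ℝ) :=
    ((continuous_pow 2).mul ((Real.continuous_exp.comp
      (continuous_const.mul continuous_id)).mul (q0_cont φ η γ))).aestronglyMeasurable
  have h4 : ∀ᵐ l : ℝ, ∀ s ∈ Metric.ball (0:ℝ) ε, ‖l ^ 2 * (Real.exp (s * l) * q0 φ η γ l)‖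
      ≤ ε⁻¹ ^ 2 * 4 * (Real.exp (κ * l) * q0 φ η γ l + Real.exp ((-κ) * l) * q0 φ η γ l) := by
    refine Filter.Eventually.of_forall fun l => fun s hs => ?_
    have hsabs : |s| < ε := by simpa [Real.dist_eq] using hs
    have hq := q0_nonneg φ η γ hφ l
    set A := Real.exp (ε * l) with hA
    set B := Real.exp (-(ε * l)) with hB
    set E := Real.exp (s * l) with hE
    set S := Real.exp (κ * l) + Real.exp (-(κ * l)) with hS
    have key : l ^ 2 * E ≤ ε⁻¹ ^ 2 * 4 * S := by
      have he1 : |l| ≤ ε⁻¹ * (A + B) := E1 hεpos l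
      have hl2 : l ^ 2 * E ≤ (ε⁻¹ * (A + B)) ^ 2 * E := by
        rw [← sq_abs l]
        exact mul_le_mul_of_nonneg_right
          (pow_le_pow_left₀ (abs_nonneg l) he1 2) (Real.exp_pos _).le
      have hAB : A * B = 1 := by
        rw [hA, hB, ← Real.exp_add]
        simp
      have hAAE : A * A * E = Real.exp ((s + 2 * ε) * l) := by
        rw [hA, hE, ← Real.exp_add, ← Real.exp_add]
        congr 1
        ring
      have hBBE : B * B * E = Real.exp ((s - 2 * ε) * l) := by
        rw [hB, hE, ← Real.exp_add, ← Real.exp_add]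
        congr 1
        ring
      have hexpand : (ε⁻¹ * (A + B)) ^ 2 * E
          = ε⁻¹ ^ 2 * (A * A * E + 2 * ((A * B) * E) + B * B * E) := by ring
      rw [hexpand, hAB, hAAE, hBBE, one_mul] at hl2
      have hb1 : Real.exp ((s + 2 * ε) * l) ≤ S := E0 (by
        rw [hS] at *
        have := abs_add_le s (2 * ε)
        rw [abs_of_pos (by linarith : (0:ℝ) < 2 * ε)] at this
        rw [hκdef]
        linarith)
      have hb2 : Real.exp ((s - 2 * ε) * l) ≤ S := E0 (by
        have := abs_sub s (2 * ε)
        rw [abs_of_pos (by linarith : (0:ℝ) < 2 * ε)] at this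
        rw [hκdef]
        linarith)
      have hb3 : E ≤ S := E0 (by rw [hκdef]; linarith)
      have h5 : (0:ℝ) < ε⁻¹ := inv_pos.2 hεpos
      nlinarith
    have hnorm : ‖l ^ 2 * (Real.exp (s * l) * q0 φ η γ l)‖
        = l ^ 2 * E * q0 φ η γ l := by
      rw [norm_mul, norm_mul, Real.norm_eq_abs, Real.norm_eq_abs, Real.norm_eq_abs,
        abs_of_pos (Real.exp_pos _), abs_of_nonneg hq, abs_of_nonneg (sq_nonneg l), mul_assoc]
    rw [hnorm, show ε⁻¹ ^ 2 * 4 * (Real.exp (κ * l) * q0 φ η γ l +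
        Real.exp ((-κ) * l) * q0 φ η γ l)
      = (ε⁻¹ ^ 2 * 4 * S) * q0 φ η γ l by
        rw [hS, show (-κ) * l = -(κ * l) by ring]; ring]
    exact mul_le_mul_of_nonneg_right key hq
  have h5 := bound_integrable hφ hη hγ (ε⁻¹ ^ 2 * 4)
  have h6 : ∀ᵐ l : ℝ, ∀ s ∈ Metric.ball (0:ℝ) ε,
      HasDerivAt (fun s => l * (Real.exp (s * l) * q0 φ η γ l))
        (l ^ 2 * (Real.exp (s * l) * q0 φ η γ l)) s := by
    refine Filter.Eventually.of_forall fun l => fun s _ => ?_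
    have h := ((((hasDerivAt_id s).mul_const l).exp).mul_const (q0 φ η γ l)).const_mul l
    simp only [id_eq] at h
    refine h.congr_deriv ?_
    ring
  exact hasDerivAt_integral_of_dominated_loc_of_deriv_le (Metric.ball_mem_nhds 0 hεpos) h1 h2 h3 h4 h5 h6
end D


/-- If λ has the generalized logistic density
p(λ) = (1/B(γ,η))·φ·e^(-φηλ)/(1+e^(-φλ))^(η+γ), then
Var[λ] = (ψ'(γ) + ψ'(η))/φ². -/
theorem GL_variance (φ η γ : ℝ) (hφ : 0 < φ) (hη : 0 < η) (hγ : 0 < γ)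
    (p : ℝ → ℝ)
    (hp : p = fun l =>
      (Real.Gamma (γ + η) / (Real.Gamma γ * Real.Gamma η)) *
        (φ * Real.exp (-(φ * η * l)) / (1 + Real.exp (-(φ * l))) ^ (η + γ)))
    (m : ℝ) (hm : m = ∫ l : ℝ, l * p l) :
    Integrable (fun l : ℝ => (l - m) ^ 2 * p l) ∧
      ∫ l : ℝ, (l - m) ^ 2 * p l = (trigamma γ + trigamma η) / φ ^ 2 := by
  have hm0 : (0:ℝ) < φ * min γ η := by
    have : 0 < min γ η := lt_min hγ hη
    positivity
  set ε : ℝ := φ * min γ η / 4 with hε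
  have hεpos : 0 < ε := by linarith
  have hεlt : ε < φ * min γ η := by rw [hε]; linarith
  -- positivity of shifted parameters
  have hpos : ∀ s : ℝ, |s| < φ * min γ η → 0 < γ + s / φ ∧ 0 < η - s / φ := by
    intro s hs
    obtain ⟨hs1, hs2⟩ := abs_lt.1 hs
    have hmin1 : φ * min γ η ≤ φ * γ := mul_le_mul_of_nonneg_left (min_le_left _ _) hφ.le
    have hmin2 : φ * min γ η ≤ φ * η := mul_le_mul_of_nonneg_left (min_le_right _ _) hφ.le
    constructor
    · have h : -γ < s / φ := by
        rw [lt_div_iff₀ hφ]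
        nlinarith
      linarith
    · have h : s / φ < η := by
        rw [div_lt_iff₀ hφ]
        nlinarith
      linarith
  have hΓγ : 0 < Real.Gamma γ := Real.Gamma_pos_of_pos hγ
  have hΓη : 0 < Real.Gamma η := Real.Gamma_pos_of_pos hη
  have hΓγη : 0 < Real.Gamma (γ + η) := Real.Gamma_pos_of_pos (by linarith)
  set C : ℝ := Real.Gamma (γ + η) / (Real.Gamma γ * Real.Gamma η) with hC
  have hpq : p = fun l => C * q0 φ η γ l := by rw [hp]; rfl
  set L : ℝ → ℝ := fun y => Real.log (Real.Gamma y) with hL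
  set Hfun : ℝ → ℝ := fun s => L (γ + s / φ) + L (η - s / φ) with hHfun
  set W : ℝ → ℝ := fun s => digamma (γ + s / φ) * φ⁻¹ - digamma (η - s / φ) * φ⁻¹ with hW
  set G : ℝ → ℝ := fun s => ∫ l : ℝ, Real.exp (s * l) * q0 φ η γ l with hG
  set G₁ : ℝ → ℝ := fun s => ∫ l : ℝ, l * (Real.exp (s * l) * q0 φ η γ l) with hG₁
  -- G equals exp (Hfun) / Γ(γ+η) on the large interval
  have hGR : ∀ s : ℝ, |s| < φ * min γ η → G s = Real.exp (Hfun s) / Real.Gamma (γ + η) := by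
    intro s hs
    obtain ⟨ha, hb⟩ := hpos s hs
    rw [hG]
    simp only
    rw [(mgf hφ hη hγ hs).2, hHfun]
    simp only
    rw [Real.exp_add, hL]
    simp only
    rw [Real.exp_log (Real.Gamma_pos_of_pos ha), Real.exp_log (Real.Gamma_pos_of_pos hb)]
  -- derivative of Hfun
  have hHd : ∀ s : ℝ, |s| < φ * min γ η → HasDerivAt Hfun (W s) s := by
    intro s hs
    obtain ⟨ha, hb⟩ := hpos s hs
    have inner1 : HasDerivAt (fun s : ℝ => γ + s / φ) φ⁻¹ s := by
      simpa using ((hasDerivAt_id s).div_const φ).const_add γ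
    have inner2 : HasDerivAt (fun s : ℝ => η - s / φ) (-φ⁻¹) s := by
      simpa using ((hasDerivAt_id s).div_const φ).const_sub η
    have c1 : HasDerivAt (fun s : ℝ => L (γ + s / φ)) (digamma (γ + s / φ) * φ⁻¹) s :=
      by have := (hasDerivAt_logGamma ha).comp s inner1; exact this
    have c2 : HasDerivAt (fun s : ℝ => L (η - s / φ)) (digamma (η - s / φ) * -φ⁻¹) s :=
      by have := (hasDerivAt_logGamma hb).comp s inner2; exact this
    have := c1.add c2
    refine this.congr_deriv ?_
    rw [hW]
    ring
  -- G₁ = W * exp Hfun / Γ(γ+η) on the ball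
  have hG1W : ∀ s : ℝ, |s| < ε →
      G₁ s = Real.exp (Hfun s) * W s / Real.Gamma (γ + η) := by
    intro s hs
    have hs' : |s| < φ * min γ η := lt_trans hs hεlt
    have hasG : HasDerivAt G (G₁ s) s := (D1 hφ hη hγ (by rw [← hε]; exact hs)).2
    have hasR : HasDerivAt (fun t => Real.exp (Hfun t) / Real.Gamma (γ + η))
        (Real.exp (Hfun s) * W s / Real.Gamma (γ + η)) s :=
      ((hHd s hs').exp).div_const _
    have heq : G =ᶠ[nhds s] fun t => Real.exp (Hfun t) / Real.Gamma (γ + η) := by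
      have hopen : Metric.ball (0:ℝ) (φ * min γ η) ∈ nhds s := by
        apply Metric.isOpen_ball.mem_nhds
        simpa [Real.dist_eq] using hs'
      filter_upwards [hopen] with t ht
      exact hGR t (by simpa [Real.dist_eq] using ht)
    have hasR' : HasDerivAt G (Real.exp (Hfun s) * W s / Real.Gamma (γ + η)) s :=
      hasR.congr_of_eventuallyEq heq
    exact hasG.unique hasR'
  -- second derivative data
  have hW0 : HasDerivAt W ((trigamma γ + trigamma η) / φ ^ 2) 0 := by
    have inner1 : HasDerivAt (fun s : ℝ => γ + s / φ) φ⁻¹ 0 := by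
      simpa using ((hasDerivAt_id (0:ℝ)).div_const φ).const_add γ
    have inner2 : HasDerivAt (fun s : ℝ => η - s / φ) (-φ⁻¹) 0 := by
      simpa using ((hasDerivAt_id (0:ℝ)).div_const φ).const_sub η
    have e1 : γ + (0:ℝ) / φ = γ := by simp
    have e2 : η - (0:ℝ) / φ = η := by simp
    have c1 : HasDerivAt (fun s : ℝ => digamma (γ + s / φ)) (trigamma γ * φ⁻¹) 0 := by
      have := (hasDerivAt_digamma (x := γ + (0:ℝ) / φ) (by rw [e1]; exact hγ)).comp 0 inner1
      rw [e1] at this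
      exact this
    have c2 : HasDerivAt (fun s : ℝ => digamma (η - s / φ)) (trigamma η * -φ⁻¹) 0 := by
      have := (hasDerivAt_digamma (x := η - (0:ℝ) / φ) (by rw [e2]; exact hη)).comp 0 inner2
      rw [e2] at this
      exact this
    have := (c1.mul_const φ⁻¹).sub (c2.mul_const φ⁻¹)
    refine this.congr_deriv ?_
    rw [div_eq_mul_inv, show ((φ:ℝ) ^ 2)⁻¹ = φ⁻¹ * φ⁻¹ by rw [sq, mul_inv]]
    ring
  have h0ball : |(0:ℝ)| < ε := by simpa using hεpos
  have h0' : |(0:ℝ)| < φ * min γ η := by simpa using hm0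
  set ψfun : ℝ → ℝ := fun s => Real.exp (Hfun s) * W s / Real.Gamma (γ + η) with hψfun
  have hψd : HasDerivAt ψfun
      ((Real.exp (Hfun 0) * W 0 * W 0 + Real.exp (Hfun 0) * ((trigamma γ + trigamma η) / φ ^ 2))
        / Real.Gamma (γ + η)) 0 :=
    ((((hHd 0 h0').exp).mul hW0)).div_const _
  have hI₂ : HasDerivAt G₁ (∫ l : ℝ, l ^ 2 * (Real.exp ((0:ℝ) * l) * q0 φ η γ l)) 0 :=
    (D2 hφ hη hγ).2
  have heq2 : G₁ =ᶠ[nhds 0] ψfun := by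
    have hopen : Metric.ball (0:ℝ) ε ∈ nhds (0:ℝ) := Metric.isOpen_ball.mem_nhds (by
      simpa [Real.dist_eq] using hεpos)
    filter_upwards [hopen] with t ht
    exact hG1W t (by simpa [Real.dist_eq] using ht)
  have hasψG₁ : HasDerivAt G₁
      ((Real.exp (Hfun 0) * W 0 * W 0 + Real.exp (Hfun 0) * ((trigamma γ + trigamma η) / φ ^ 2))
        / Real.Gamma (γ + η)) 0 :=
    hψd.congr_of_eventuallyEq heq2
  have hI₂val : (∫ l : ℝ, l ^ 2 * (Real.exp ((0:ℝ) * l) * q0 φ η γ l))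
      = (Real.exp (Hfun 0) * W 0 * W 0 +
          Real.exp (Hfun 0) * ((trigamma γ + trigamma η) / φ ^ 2)) / Real.Gamma (γ + η) :=
    hI₂.unique hasψG₁
  -- basic values at 0
  have hexpH0 : Real.exp (Hfun 0) = Real.Gamma γ * Real.Gamma η := by
    rw [hHfun]
    simp only
    rw [Real.exp_add, hL]
    simp only
    rw [show γ + (0:ℝ) / φ = γ by simp, show η - (0:ℝ) / φ = η by simp,
      Real.exp_log hΓγ, Real.exp_log hΓη]
  have hG0 : G 0 = Real.Gamma γ * Real.Gamma η / Real.Gamma (γ + η) := by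
    rw [hGR 0 h0', hexpH0]
  have hG₁0 : G₁ 0 = Real.Gamma γ * Real.Gamma η * W 0 / Real.Gamma (γ + η) := by
    rw [hG1W 0 h0ball, hexpH0]
  -- integrability of pieces
  have hi1 : Integrable (fun l : ℝ => Real.exp ((0:ℝ) * l) * q0 φ η γ l) := (mgf hφ hη hγ h0').1
  have hi2 : Integrable (fun l : ℝ => l * (Real.exp ((0:ℝ) * l) * q0 φ η γ l)) :=
    (D1 hφ hη hγ (by rw [← hε]; exact h0ball)).1
  have hi3 : Integrable (fun l : ℝ => l ^ 2 * (Real.exp ((0:ℝ) * l) * q0 φ η γ l)) :=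
    (D2 hφ hη hγ).1
  -- express p-integrands
  have hq1 : p = fun l => C * (Real.exp ((0:ℝ) * l) * q0 φ η γ l) := by
    funext l
    rw [hpq]
    simp
  have hq2 : (fun l : ℝ => l * p l) = fun l => C * (l * (Real.exp ((0:ℝ) * l) * q0 φ η γ l)) := by
    funext l
    rw [hpq]
    simp
    ring
  have hq3 : (fun l : ℝ => l ^ 2 * p l)
      = fun l => C * (l ^ 2 * (Real.exp ((0:ℝ) * l) * q0 φ η γ l)) := by
    funext l
    rw [hpq]
    simp
    ring
  have hip1 : Integrable p := by rw [hq1]; exact hi1.const_mul C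
  have hip2 : Integrable (fun l : ℝ => l * p l) := by rw [hq2]; exact hi2.const_mul C
  have hip3 : Integrable (fun l : ℝ => l ^ 2 * p l) := by rw [hq3]; exact hi3.const_mul C
  -- values of the three integrals
  have hv1 : ∫ l : ℝ, p l = 1 := by
    rw [hq1, integral_const_mul]
    have : (∫ l : ℝ, Real.exp ((0:ℝ) * l) * q0 φ η γ l) = G 0 := by rw [hG]
    rw [this, hG0, hC]
    field_simp
  have hvm : m = C * G₁ 0 := by
    rw [hm, hq2, integral_const_mul, hG₁]
  have hmW : m = W 0 := by
    rw [hvm, hG₁0, hC]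
    field_simp
  have hv3 : ∫ l : ℝ, l ^ 2 * p l = (trigamma γ + trigamma η) / φ ^ 2 + m ^ 2 := by
    rw [hq3, integral_const_mul]
    have : (∫ l : ℝ, l ^ 2 * (Real.exp ((0:ℝ) * l) * q0 φ η γ l))
        = (Real.exp (Hfun 0) * W 0 * W 0 +
            Real.exp (Hfun 0) * ((trigamma γ + trigamma η) / φ ^ 2)) / Real.Gamma (γ + η) :=
      hI₂val
    rw [this, hexpH0, hC, hmW]
    field_simp
    ring
  -- final assembly
  have hfun : (fun l : ℝ => (l - m) ^ 2 * p l)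
      = fun l : ℝ => l ^ 2 * p l - 2 * m * (l * p l) + m ^ 2 * p l := by
    funext l
    ring
  constructor
  · rw [hfun]
    exact (hip3.sub ((hip2.const_mul (2 * m)))).add (hip1.const_mul (m ^ 2))
  · have hsub : Integrable (fun l : ℝ => l ^ 2 * p l - 2 * m * (l * p l)) :=
      hip3.sub (hip2.const_mul (2 * m))
    have hadd : (∫ l : ℝ, (l ^ 2 * p l - 2 * m * (l * p l)) + m ^ 2 * p l)
        = (∫ l : ℝ, l ^ 2 * p l - 2 * m * (l * p l)) + ∫ l : ℝ, m ^ 2 * p l :=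
      integral_add hsub (hip1.const_mul (m ^ 2))
    have hsubval : (∫ l : ℝ, l ^ 2 * p l - 2 * m * (l * p l))
        = (∫ l : ℝ, l ^ 2 * p l) - ∫ l : ℝ, 2 * m * (l * p l) :=
      integral_sub hip3 (hip2.const_mul (2 * m))
    rw [hfun, hadd, hsubval, integral_const_mul, integral_const_mul, ← hm, hv1, hv3]
    ring
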